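/- If F is a non-meager P-filter on ω extending the Fréchet filter, then the countable power F^ω (with the product topology, F carrying the subspace topology from 2^ω) is homeomorphic to a non-meager P-filter on a countable set. -/

import Mathlib

open Set

/-- A point of the Cantor space `α → Bool`, viewed as a subset of `α`
(the identification of `2^ω` with `𝒫(ω)` via characteristic functions). -/
def toSet {α : Type*} (x : α → Bool) : Set α := {a | x a = true}

/-- The copy of a family `F ⊆ 𝒫(α)` inside the Cantor space `α → Bool`. -/
def cantorCopy {α : Type*} (F : Set (Set α)) : Set (α → Bool) := toSet ⁻¹' F

/-- `F` is a filter on `α`: contains the whole set, not `∅`, closed under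
finite intersections and supersets. -/
def IsFilterOn {α : Type*} (F : Set (Set α)) : Prop :=
  Set.univ ∈ F ∧ ∅ ∉ F ∧ (∀ A B : Set α, A ∈ F → B ∈ F → A ∩ B ∈ F) ∧
    ∀ A B : Set α, A ∈ F → A ⊆ B → B ∈ F

/-- `F` extends the Fréchet filter: every cofinite set belongs to `F`. -/
def ExtendsFrechet {α : Type*} (F : Set (Set α)) : Prop :=
  ∀ A : Set α, Aᶜ.Finite → A ∈ F

/-- `F` is a P-filter: every countable subfamily has a pseudo-intersection in `F`. -/
def IsPFilterOn {α : Type*} (F : Set (Set α)) : Prop :=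
  ∀ X : ℕ → Set α, (∀ n, X n ∈ F) → ∃ Y ∈ F, ∀ n, (Y \ X n).Finite

/-- `F` is non-meager as a subset of the Cantor space `α → Bool`. -/
def NonMeagerFamily {α : Type*} (F : Set (Set α)) : Prop :=
  ¬ IsMeagre (cantorCopy F)

/-- `I` is an ideal on `α`: contains `∅`, not the whole set, closed under
finite unions and subsets. -/
def IsIdealOn {α : Type*} (I : Set (Set α)) : Prop :=
  ∅ ∈ I ∧ Set.univ ∉ I ∧ (∀ A B : Set α, A ∈ I → B ∈ I → A ∪ B ∈ I) ∧
    ∀ A B : Set α, A ∈ I → B ⊆ A → B ∈ I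

/-- `I` contains all finite sets. -/
def ContainsFinites {α : Type*} (I : Set (Set α)) : Prop :=
  ∀ A : Set α, A.Finite → A ∈ I

/-- `I` is a P-ideal: every countable subfamily has a member of `I`
almost containing each of them. -/
def IsPIdealOn {α : Type*} (I : Set (Set α)) : Prop :=
  ∀ X : ℕ → Set α, (∀ n, X n ∈ I) → ∃ Y ∈ I, ∀ n, (X n \ Y).Finite

/-- A topological space is countable dense homogeneous. -/
def CDH (X : Type*) [TopologicalSpace X] : Prop :=
  ∀ D E : Set X, D.Countable → Dense D → E.Countable → Dense E →
    ∃ h : X ≃ₜ X, h '' D = E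

/-- `D` is a (set-theoretic) subfamily of `F` that is dense in `F` with respect to
the subspace topology `F` inherits from the Cantor space. -/
def DenseIn {α : Type*} (D F : Set (Set α)) : Prop :=
  D ⊆ F ∧ cantorCopy F ⊆ closure (cantorCopy D)

def prodFam (F : Set (Set ℕ)) : Set (Set (ℕ × ℕ)) := {A | ∀ n, {m | (n, m) ∈ A} ∈ F}


lemma nwdUnion {X : Type*} [TopologicalSpace X] {s t : Set X} (hsc : IsClosed s)
    (hs : IsNowhereDense s) (htc : IsClosed t) (ht : IsNowhereDense t) :
    IsClosed (s ∪ t) ∧ IsNowhereDense (s ∪ t) := by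
  refine ⟨hsc.union htc, ?_⟩
  rw [(hsc.union htc).isNowhereDense_iff]
  have h1 : interior (s ∪ t) \ s ⊆ interior t := by
    apply subset_interior_iff.mpr
    exact ⟨interior (s ∪ t) \ s, isOpen_interior.sdiff hsc, Subset.rfl,
      fun x hx => (interior_subset hx.1).resolve_left hx.2⟩
  rw [htc.isNowhereDense_iff.mp ht] at h1
  have h2 : interior (s ∪ t) ⊆ s := fun x hx => by
    by_contra hxs; exact h1 ⟨hx, hxs⟩
  have h3 : interior (s ∪ t) ⊆ interior s :=
    interior_maximal h2 isOpen_interior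
  rw [hsc.isNowhereDense_iff.mp hs] at h3
  exact subset_empty_iff.mp h3

lemma nwd_extend {N : Set (ℕ × ℕ → Bool)} (hNc : IsClosed N) (hN : IsNowhereDense N)
    (s : ℕ) (x : ℕ × ℕ → Bool) :
    ∃ y : ℕ × ℕ → Bool, (∀ p : ℕ × ℕ, p.1 < s → p.2 < s → y p = x p) ∧
      ∃ t, s < t ∧ ∀ z : ℕ × ℕ → Bool, (∀ p : ℕ × ℕ, p.1 < t → p.2 < t → z p = y p) → z ∉ N := by
  have hdense : Dense Nᶜ := (isClosed_isNowhereDense_iff_compl.mp ⟨hNc, hN⟩).2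
  set U : Set (ℕ × ℕ → Bool) := {y | ∀ p : ℕ × ℕ, p.1 < s → p.2 < s → y p = x p} with hU
  have hUeq : U = ⋂ p ∈ ((Finset.range s ×ˢ Finset.range s : Finset (ℕ × ℕ)) : Set (ℕ × ℕ)),
      {y : ℕ × ℕ → Bool | y p = x p} := by
    ext y
    simp only [hU, mem_setOf_eq, mem_iInter, Finset.coe_product, Finset.coe_range, mem_prod,
      mem_Iio, Finset.mem_coe, Finset.mem_product, Finset.mem_range]
    exact ⟨fun h p hp => h p hp.1 hp.2, fun h p h1 h2 => h p ⟨h1, h2⟩⟩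
  have hUopen : IsOpen U := by
    rw [hUeq]
    exact Set.Finite.isOpen_biInter ((Finset.range s ×ˢ Finset.range s).finite_toSet)
      (fun p _ => by
        have : {y : ℕ × ℕ → Bool | y p = x p} = (fun y : ℕ × ℕ → Bool => y p) ⁻¹' {x p} := rfl
        rw [this]
        exact (isOpen_discrete _).preimage (continuous_apply p))
  obtain ⟨y, hyN, hyU⟩ := hdense.exists_mem_open hUopen ⟨x, fun p _ _ => rfl⟩
  have hVopen : IsOpen (Nᶜ ∩ U) := (hNc.isOpen_compl).inter hUopen
  obtain ⟨I, u, hIu, hpi⟩ := isOpen_pi_iff.mp hVopen y ⟨hyN, hyU⟩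
  refine ⟨y, fun p h1 h2 => hyU p h1 h2, s + 1 + I.sup (fun p => max p.1 p.2) + 1, by omega,
    fun z hz hzN => ?_⟩
  have : z ∈ (I : Set (ℕ × ℕ)).pi u := by
    intro p hp
    have hb : max p.1 p.2 ≤ I.sup (fun p => max p.1 p.2) := Finset.le_sup (f := fun p => max p.1 p.2) hp
    have hb1 : p.1 ≤ I.sup (fun p => max p.1 p.2) := le_trans (le_max_left _ _) hb
    have hb2 : p.2 ≤ I.sup (fun p => max p.1 p.2) := le_trans (le_max_right _ _) hb
    rw [hz p (by omega) (by omega)]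
    exact (hIu p hp).2
  exact (hpi this).1 hzN

lemma frechet_nonmeager_avoid (F : Set (Set ℕ)) (hNM : NonMeagerFamily F)
    (a : ℕ → ℕ) (ha : StrictMono a) :
    ∃ x : ℕ → Bool, toSet x ∈ F ∧ {j | ∀ i, a j ≤ i → i < a (j+1) → x i = false}.Infinite := by
  by_contra hcon
  push_neg at hcon
  apply hNM
  set T : ℕ → Set (ℕ → Bool) :=
    fun m => {x | ∀ j, m ≤ j → ∃ i, a j ≤ i ∧ i < a (j+1) ∧ x i = true} with hT
  have hsub : cantorCopy F ⊆ ⋃ m, T m := by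
    intro x hx
    have hfin : {j | ∀ i, a j ≤ i → i < a (j+1) → x i = false}.Finite :=
      hcon x hx
    obtain ⟨m, hm⟩ := hfin.bddAbove
    refine mem_iUnion.mpr ⟨m + 1, fun j hj => ?_⟩
    have hjS : j ∉ {j | ∀ i, a j ≤ i → i < a (j+1) → x i = false} := by
      intro hjmem
      have := hm hjmem
      omega
    simp only [mem_setOf_eq, not_forall] at hjS
    obtain ⟨i, h1, h2, h3⟩ := hjS
    exact ⟨i, h1, h2, by simpa using h3⟩
  have hclosed : ∀ m, IsClosed (T m) := by
    intro m
    have : T m = ⋂ j, ⋂ (_ : m ≤ j), ⋃ i ∈ Set.Ico (a j) (a (j+1)), {x : ℕ → Bool | x i = true} := by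
      ext x
      simp only [hT, mem_setOf_eq, mem_iInter, mem_iUnion, mem_Ico, mem_setOf_eq]
      exact ⟨fun h j hj => by obtain ⟨i, h1, h2, h3⟩ := h j hj; exact ⟨i, ⟨h1, h2⟩, h3⟩,
        fun h j hj => by obtain ⟨i, ⟨h1, h2⟩, h3⟩ := h j hj; exact ⟨i, h1, h2, h3⟩⟩
    rw [this]
    refine isClosed_iInter fun j => isClosed_iInter fun _ => ?_
    refine Set.Finite.isClosed_biUnion (Set.finite_Ico _ _) fun i _ => ?_
    have : {x : ℕ → Bool | x i = true} = (fun x : ℕ → Bool => x i) ⁻¹' {true} := rfl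
    rw [this]
    exact (isClosed_discrete _).preimage (continuous_apply i)
  have hint : ∀ m, interior (T m) = ∅ := by
    intro m
    by_contra hne
    obtain ⟨x, hx⟩ := nonempty_iff_ne_empty.mpr hne
    obtain ⟨I, u, hIu, hpi⟩ := isOpen_pi_iff.mp isOpen_interior x hx
    set M := I.sup id + 1 with hM
    set j := max m M with hj
    have haj : M ≤ a j := le_trans (le_max_right m M) ha.le_apply
    set y : ℕ → Bool := fun i => if a j ≤ i ∧ i < a (j+1) then false else x i with hy
    have hymem : y ∈ (I : Set ℕ).pi u := by
      intro i hi
      have : i ≤ I.sup id := Finset.le_sup (f := id) hi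
      have hcond : ¬(a j ≤ i ∧ i < a (j+1)) := by omega
      simp only [hy, if_neg hcond]
      exact (hIu i hi).2
    have hyT : y ∈ T m := interior_subset (hpi hymem)
    obtain ⟨i, h1, h2, h3⟩ := hyT j (le_max_left m M)
    rw [hy] at h3
    simp only [h1, h2, and_self, if_true] at h3
    exact Bool.false_ne_true h3
  have hmeag : ∀ m, IsMeagre (T m) := by
    intro m
    rw [isMeagre_iff_countable_union_isNowhereDense]
    refine ⟨{T m}, fun t ht => ?_, countable_singleton _, subset_sUnion_of_mem rfl⟩
    rw [mem_singleton_iff] at ht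
    rw [ht, (hclosed m).isNowhereDense_iff]
    exact hint m
  exact (isMeagre_iUnion hmeag).mono hsub

lemma prodFam_nonmeager (F : Set (Set ℕ))
    (hInt : ∀ A B : Set ℕ, A ∈ F → B ∈ F → A ∩ B ∈ F)
    (hup : ∀ A B : Set ℕ, A ∈ F → A ⊆ B → B ∈ F)
    (hFr : ∀ A : Set ℕ, Aᶜ.Finite → A ∈ F)
    (hNM : NonMeagerFamily F) : NonMeagerFamily (prodFam F) := by
  classical
  intro hme
  rw [isMeagre_iff_countable_union_isNowhereDense] at hme
  obtain ⟨S, hSnwd, hScnt, hScov⟩ := hme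
  obtain ⟨f, hf⟩ := Set.Countable.exists_eq_range (hScnt.insert ∅) (insert_nonempty _ _)
  have hfnwd : ∀ k, IsNowhereDense (f k) := by
    intro k
    have : f k ∈ insert (∅ : Set (ℕ × ℕ → Bool)) S := hf ▸ mem_range_self k
    rcases this with h | h
    · rw [h]; exact isNowhereDense_empty
    · exact hSnwd _ h
  -- the increasing closed nowhere dense sets
  let N : ℕ → Set ((ℕ × ℕ) → Bool) :=
    fun k => Nat.rec (closure (f 0)) (fun k Nk => Nk ∪ closure (f (k+1))) k
  have hNsucc : ∀ k, N (k+1) = N k ∪ closure (f (k+1)) := fun _ => rfl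
  have hNcl : ∀ k, IsClosed (N k) ∧ IsNowhereDense (N k) := by
    intro k
    induction k with
    | zero => exact ⟨isClosed_closure, (hfnwd 0).closure⟩
    | succ k ih => exact nwdUnion ih.1 ih.2 isClosed_closure ((hfnwd (k+1)).closure)
  have hNmono : ∀ k j, k ≤ j → N k ⊆ N j := by
    intro k j hkj
    induction j with
    | zero => rw [Nat.le_zero.mp hkj]
    | succ j ih =>
      rcases Nat.le_succ_iff.mp hkj with h | h
      · exact (ih h).trans subset_union_left
      · rw [h]
  have hNf : ∀ k, closure (f k) ⊆ N k := by
    intro k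
    cases k with
    | zero => exact Subset.rfl
    | succ k => rw [hNsucc]; exact subset_union_right
  -- choice of extensions
  have hext : ∀ k s (x : ℕ × ℕ → Bool), ∃ y : ℕ × ℕ → Bool,
      (∀ p : ℕ × ℕ, p.1 < s → p.2 < s → y p = x p) ∧
      ∃ t, s < t ∧ ∀ z : ℕ × ℕ → Bool, (∀ p : ℕ × ℕ, p.1 < t → p.2 < t → z p = y p) → z ∉ N k :=
    fun k s x => nwd_extend (hNcl k).1 (hNcl k).2 s x
  choose yf hyag tf hst hprop using hext
  -- restriction to a square
  let restr : ℕ → ((ℕ × ℕ) → Bool) → ((ℕ × ℕ) → Bool) :=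
    fun s w p => if h : p ∈ (Finset.range s ×ˢ Finset.range s) then w p else false
  -- the scale sequence
  let step : ℕ → ℕ → ℕ := fun j s => max (s + 1)
    ((Finset.univ : Finset ((Finset.range s ×ˢ Finset.range s : Finset (ℕ × ℕ)) → Bool)).sup
      (fun g => tf j s (fun p => if h : p ∈ (Finset.range s ×ˢ Finset.range s) then g ⟨p, h⟩ else false)))
  let a : ℕ → ℕ := fun j => Nat.rec 0 (fun j s => step j s) j
  have hasucc : ∀ j, a (j+1) = step j (a j) := fun _ => rfl
  have hamono : StrictMono a := by
    apply strictMono_nat_of_lt_succ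
    intro j
    rw [hasucc j]
    exact lt_of_lt_of_le (Nat.lt_succ_self _) (le_max_left _ _)
  have hkey : ∀ j (w : (ℕ × ℕ) → Bool), tf j (a j) (restr (a j) w) ≤ a (j+1) := by
    intro j w
    have heq : restr (a j) w = (fun p => if h : p ∈ (Finset.range (a j) ×ˢ Finset.range (a j)) then
        (fun q : (Finset.range (a j) ×ˢ Finset.range (a j) : Finset (ℕ × ℕ)) => w q.1) ⟨p, h⟩ else false) := by
      funext p
      simp only [restr]
    rw [hasucc j]
    refine le_trans ?_ (le_max_right _ _)
    rw [heq]
    exact Finset.le_sup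
      (f := fun g : (Finset.range (a j) ×ˢ Finset.range (a j) : Finset (ℕ × ℕ)) → Bool =>
        tf j (a j) (fun p => if h : p ∈ (Finset.range (a j) ×ˢ Finset.range (a j)) then g ⟨p, h⟩ else false))
      (Finset.mem_univ (fun q : (Finset.range (a j) ×ˢ Finset.range (a j) : Finset (ℕ × ℕ)) => w q.1))
  -- get a set in F avoiding infinitely many of the intervals [a j, a (j+1))
  obtain ⟨x, hxF, hxinf⟩ := frechet_nonmeager_avoid F hNM a hamono
  -- the set A
  let xA : (ℕ × ℕ) → Bool := fun p => x p.2 && decide (a (p.1 + 1) ≤ p.2)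
  have hxAsec : ∀ n, {m | xA (n, m) = true} ∈ F := by
    intro n
    have heq : {m | xA (n, m) = true} = toSet x ∩ {m | a (n + 1) ≤ m} := by
      ext m
      simp [xA, toSet, Bool.and_eq_true, decide_eq_true_eq]
    rw [heq]
    refine hInt _ _ hxF (hFr _ ?_)
    have : {m : ℕ | a (n + 1) ≤ m}ᶜ = Set.Iio (a (n + 1)) := by
      ext m; simp [Set.mem_Iio, Nat.not_le]
    rw [this]
    exact Set.finite_Iio _
  -- the "good" stages
  let Jset : Set ℕ := {j | ∀ p : ℕ × ℕ, p.1 < a (j+1) → p.2 < a (j+1) →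
    ¬(p.1 < a j ∧ p.2 < a j) → xA p = false}
  have hJinf : Jset.Infinite := by
    refine hxinf.mono ?_
    intro j hj
    intro p hp1 hp2 hp3
    rcases Nat.lt_or_ge p.1 (a j) with h1 | h1
    · have h2 : a j ≤ p.2 := by
        rcases Nat.lt_or_ge p.2 (a j) with h | h
        · exact absurd ⟨h1, h⟩ hp3
        · exact h
      have hx2 : x p.2 = false := hj p.2 h2 hp2
      show (x p.2 && decide (a (p.1 + 1) ≤ p.2)) = false
      rw [hx2, Bool.false_and]
    · have h1' : ¬ p.1 < a j := Nat.not_lt.mpr h1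
      have h4 : j ≤ a j := hamono.le_apply
      have h4'' : j + 1 ≤ p.1 + 1 := by omega
      have h5 := hamono.monotone h4''
      show (x p.2 && decide (a (p.1 + 1) ≤ p.2)) = false
      have h6 : decide (a (p.1 + 1) ≤ p.2) = false := decide_eq_false (by omega)
      rw [h6, Bool.and_false]
  -- the recursive construction of B
  let g : ℕ → ((ℕ × ℕ) → Bool) := fun n => Nat.rec xA
    (fun j w => fun p => @ite _ (p.1 < a (j+1) ∧ p.2 < a (j+1) ∧ ¬(p.1 < a j ∧ p.2 < a j) ∧ j ∈ Jset)
      (Classical.propDecidable _) (yf j (a j) (restr (a j) w) p) (w p)) n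
  have hgsucc : ∀ j p, g (j+1) p =
      @ite _ (p.1 < a (j+1) ∧ p.2 < a (j+1) ∧ ¬(p.1 < a j ∧ p.2 < a j) ∧ j ∈ Jset)
      (Classical.propDecidable _) (yf j (a j) (restr (a j) (g j)) p) (g j p) := fun _ _ => rfl
  have hstab : ∀ j j', j ≤ j' → ∀ p : ℕ × ℕ, p.1 < a j → p.2 < a j → g j' p = g j p := by
    intro j j' hjj'
    induction j', hjj' using Nat.le_induction with
    | base => intro p _ _; rfl
    | succ j' hj ih =>
      intro p hp1 hp2
      rw [hgsucc j' p]
      have hmono := hamono.monotone hj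
      rw [if_neg]
      · exact ih p hp1 hp2
      · rintro ⟨_, _, hn, _⟩
        exact hn ⟨lt_of_lt_of_le hp1 hmono, lt_of_lt_of_le hp2 hmono⟩
  have hA_le : ∀ j (p : ℕ × ℕ), xA p = true → g j p = true := by
    intro j
    induction j with
    | zero => intro p h; exact h
    | succ j ih =>
      intro p h
      rw [hgsucc j p]
      rcases Classical.em (p.1 < a (j+1) ∧ p.2 < a (j+1) ∧ ¬(p.1 < a j ∧ p.2 < a j) ∧ j ∈ Jset) with hc | hc
      · obtain ⟨hc1, hc2, hc3, hc4⟩ := hc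
        have := hc4 p hc1 hc2 hc3
        rw [this] at h
        exact absurd h (by simp)
      · rw [if_neg hc]
        exact ih p h
  let B : (ℕ × ℕ) → Bool := fun p => g (max p.1 p.2 + 1) p
  have hBg : ∀ j (p : ℕ × ℕ), p.1 < a j → p.2 < a j → B p = g j p := by
    intro j p hp1 hp2
    rcases le_total (max p.1 p.2 + 1) j with h | h
    · have hpm1 : p.1 < a (max p.1 p.2 + 1) := by
        have h1 : p.1 < max p.1 p.2 + 1 := by omega
        have h2 : max p.1 p.2 + 1 ≤ a (max p.1 p.2 + 1) := hamono.le_apply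
        omega
      have hpm2 : p.2 < a (max p.1 p.2 + 1) := by
        have h1 : p.2 < max p.1 p.2 + 1 := by omega
        have h2 : max p.1 p.2 + 1 ≤ a (max p.1 p.2 + 1) := hamono.le_apply
        omega
      exact (hstab (max p.1 p.2 + 1) j h p hpm1 hpm2).symm
    · exact hstab j (max p.1 p.2 + 1) h p hp1 hp2
  have hBmem : B ∈ cantorCopy (prodFam F) := by
    show toSet B ∈ prodFam F
    intro n
    refine hup {m | xA (n, m) = true} _ (hxAsec n) ?_
    intro m hm
    exact hA_le (max n m + 1) (n, m) hm
  have havoid : ∀ j ∈ Jset, B ∉ N j := by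
    intro j hj
    apply hprop j (a j) (restr (a j) (g j))
    intro p hp1 hp2
    have htle : tf j (a j) (restr (a j) (g j)) ≤ a (j+1) := hkey j (g j)
    have hp1' : p.1 < a (j+1) := by omega
    have hp2' : p.2 < a (j+1) := by omega
    rcases Classical.em (p.1 < a j ∧ p.2 < a j) with hc | hc
    · have h1 : B p = g j p := hBg j p hc.1 hc.2
      have h2 : yf j (a j) (restr (a j) (g j)) p = restr (a j) (g j) p :=
        hyag j (a j) _ p hc.1 hc.2
      have h3 : restr (a j) (g j) p = g j p := by
        have hmem : p ∈ (Finset.range (a j) ×ˢ Finset.range (a j)) := by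
          rw [Finset.mem_product, Finset.mem_range, Finset.mem_range]
          exact hc
        simp only [restr]
        rw [dif_pos hmem]
      rw [h1, h2, h3]
    · have h1 : B p = g (j+1) p := hBg (j+1) p hp1' hp2'
      rw [h1, hgsucc j p, if_pos ⟨hp1', hp2', hc, hj⟩]
  -- contradiction
  obtain ⟨u, huS, hBu⟩ := hScov hBmem
  have huf : ∃ k, u = f k := by
    have : u ∈ insert (∅ : Set (ℕ × ℕ → Bool)) S := mem_insert_iff.mpr (Or.inr huS)
    rw [hf] at this
    obtain ⟨k, hk⟩ := this
    exact ⟨k, hk.symm⟩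
  obtain ⟨k, hk⟩ := huf
  obtain ⟨j, hjJ, hjk⟩ := hJinf.exists_gt k
  have : B ∈ N j := hNmono k j (le_of_lt hjk) (hNf k (subset_closure (hk ▸ hBu)))
  exact havoid j hjJ this


lemma prodFam_filter (F : Set (Set ℕ)) (hF : IsFilterOn F) : IsFilterOn (prodFam F) := by
  obtain ⟨huniv, hne, hInt, hup⟩ := hF
  refine ⟨?_, ?_, ?_, ?_⟩
  · intro n
    have : {m : ℕ | (n, m) ∈ (Set.univ : Set (ℕ × ℕ))} = Set.univ := by ext m; simp
    rw [this]; exact huniv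
  · intro h
    have h0 := h 0
    have : {m : ℕ | ((0 : ℕ), m) ∈ (∅ : Set (ℕ × ℕ))} = ∅ := by ext m; simp
    rw [this] at h0
    exact hne h0
  · intro A B hA hB n
    have : {m | (n, m) ∈ A ∩ B} = {m | (n, m) ∈ A} ∩ {m | (n, m) ∈ B} := rfl
    rw [this]
    exact hInt _ _ (hA n) (hB n)
  · intro A B hA hAB n
    exact hup _ _ (hA n) (fun m hm => hAB hm)

lemma seg_mem (F : Set (Set ℕ))
    (hInt : ∀ A B : Set ℕ, A ∈ F → B ∈ F → A ∩ B ∈ F)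
    (hup : ∀ A B : Set ℕ, A ∈ F → A ⊆ B → B ∈ F)
    (s : ℕ → Set ℕ) (hs : ∀ k, s k ∈ F) (b : ℕ) : {m | ∀ k ≤ b, m ∈ s k} ∈ F := by
  induction b with
  | zero =>
    refine hup (s 0) _ (hs 0) ?_
    intro m hm k hk
    rw [Nat.le_zero.mp hk]
    exact hm
  | succ b ih =>
    refine hup _ _ (hInt _ _ ih (hs (b+1))) ?_
    rintro m ⟨hm1, hm2⟩ k hk
    rcases Nat.le_succ_iff.mp hk with h | h
    · exact hm1 k h
    · rw [h]; exact hm2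

lemma prodFam_pfilter (F : Set (Set ℕ)) (hF : IsFilterOn F) (hP : IsPFilterOn F) :
    IsPFilterOn (prodFam F) := by
  obtain ⟨huniv, hne, hInt, hup⟩ := hF
  intro X hX
  set s : ℕ → ℕ → Set ℕ := fun k n => {m | (n, m) ∈ X k} with hsdef
  obtain ⟨Z, hZ, hZfin⟩ := hP (fun i => s (Nat.unpair i).1 (Nat.unpair i).2)
    (fun i => hX (Nat.unpair i).1 (Nat.unpair i).2)
  have hZkn : ∀ k n, (Z \ s k n).Finite := by
    intro k n
    have := hZfin (Nat.pair k n)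
    rwa [Nat.unpair_pair] at this
  refine ⟨{p : ℕ × ℕ | p.2 ∈ Z ∧ ∀ k ≤ p.1, p.2 ∈ s k p.1}, ?_, ?_⟩
  · intro n
    have heq : {m | (n, m) ∈ {p : ℕ × ℕ | p.2 ∈ Z ∧ ∀ k ≤ p.1, p.2 ∈ s k p.1}}
        = Z ∩ {m | ∀ k ≤ n, m ∈ s k n} := rfl
    rw [heq]
    exact hInt _ _ hZ (seg_mem F hInt hup (fun k => s k n) (fun k => hX k n) n)
  · intro k
    refine Set.Finite.subset (Set.Finite.biUnion (Set.finite_Iio k)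
      (fun n _ => ((hZkn k n).image (Prod.mk n)))) ?_
    rintro ⟨n, m⟩ ⟨⟨hmZ, hms⟩, hnX⟩
    have hms' : m ∉ s k n := hnX
    have hnk : n < k := by
      rcases Nat.lt_or_ge n k with h | h
      · exact h
      · exact absurd (hms k h) hms'
    exact Set.mem_biUnion hnk ⟨m, ⟨hmZ, hms'⟩, rfl⟩

noncomputable def powerHomeo (F : Set (Set ℕ)) :
    (ℕ → ↥(cantorCopy F)) ≃ₜ ↥(cantorCopy (prodFam F)) where
  toFun x := ⟨fun p => (x p.1).1 p.2, fun n => (x n).2⟩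
  invFun y := fun n => ⟨fun m => y.1 (n, m), y.2 n⟩
  left_inv x := funext fun n => Subtype.ext rfl
  right_inv y := Subtype.ext rfl
  continuous_toFun := by
    refine Continuous.subtype_mk ?_ _
    exact continuous_pi fun p =>
      ((continuous_apply p.2).comp continuous_subtype_val).comp (continuous_apply p.1)
  continuous_invFun := by
    refine continuous_pi fun n => Continuous.subtype_mk ?_ _
    exact continuous_pi fun m => (continuous_apply ((n, m) : ℕ × ℕ)).comp continuous_subtype_val

/-- If `F` is a non-meager P-filter on `ω` extending the Fréchet filter, then `F^ω`
is homeomorphic to a non-meager P-filter on a countably infinite set. -/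
theorem stmt6 (F : Set (Set ℕ)) (hF : IsFilterOn F) (hFr : ExtendsFrechet F)
    (hP : IsPFilterOn F) (hNM : NonMeagerFamily F) :
    ∃ (S : Type) (_ : Countable S) (_ : Infinite S) (G : Set (Set S)),
      IsFilterOn G ∧ IsPFilterOn G ∧ NonMeagerFamily G ∧
      Nonempty ((ℕ → ↥(cantorCopy F)) ≃ₜ ↥(cantorCopy G)) := by
  refine ⟨ℕ × ℕ, inferInstance, inferInstance, prodFam F, prodFam_filter F hF,
    prodFam_pfilter F hF hP, prodFam_nonmeager F hF.2.2.1 hF.2.2.2 hFr hNM,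
    ⟨powerHomeo F⟩⟩
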